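/- Let d ≥ 1, T > 0, let O be a d×d real orthogonal matrix, b ∈ ℝ^d, and set g(x) := O x + b. Let σ : [0, T] → ℝ, and let f : ℝ^d × [0, T] → ℝ^d be continuously differentiable in x with f(g x, t) = O · f(x, t) for all x ∈ ℝ^d, t ∈ [0, T]. Suppose u : ℝ^d × [0, T] → ℝ is twice continuously differentiable in x and continuously differentiable in t, and satisfies the Fokker–Planck equation ∂_t u(x,t) = −∑_{i=1}^d ∂_{x_i}( f^i(x,t) · u(x,t) ) + (σ(t)²/2) · ∑_{i=1}^d ∂²_{x_i} u(x,t) for all (x,t) ∈ ℝ^d × [0, T]. Then v(x,t) := u(g x, t) satisfies the same equation: ∂_t v(x,t) = −∑_{i=1}^d ∂_{x_i}( f^i(x,t) · v(x,t) ) + (σ(t)²/2) · ∑_{i=1}^d ∂²_{x_i} v(x,t) for all (x,t) ∈ ℝ^d × [0, T]. -/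

import Mathlib

open MeasureTheory Matrix

/-- Invariance of the Fokker–Planck equation under a rigid motion `g x = O x + b`:
if the drift `f` satisfies `f (g x) t = O · f x t` and `u` solves
`∂ₜ u = −∑ᵢ ∂_{xᵢ}(fⁱ u) + (σ(t)²/2) ∑ᵢ ∂²_{xᵢ} u` on `ℝ^d × [0,T]`,
then `v(x,t) := u(g x, t)` solves the same equation. -/
theorem stmt11 {d : ℕ} (hd : 1 ≤ d) {T : ℝ} (hT : 0 < T)
    (O : Matrix (Fin d) (Fin d) ℝ) (hO : O ∈ Matrix.orthogonalGroup (Fin d) ℝ)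
    (b : Fin d → ℝ) (σ : ℝ → ℝ)
    (f : (Fin d → ℝ) → ℝ → (Fin d → ℝ))
    (hf : ∀ t ∈ Set.Icc (0 : ℝ) T, ContDiff ℝ 1 fun x => f x t)
    (hf_equiv : ∀ x, ∀ t ∈ Set.Icc (0 : ℝ) T,
      f (O.mulVec x + b) t = O.mulVec (f x t))
    (u : (Fin d → ℝ) → ℝ → ℝ)
    (hu_x : ∀ t ∈ Set.Icc (0 : ℝ) T, ContDiff ℝ 2 fun x => u x t)
    (hu_t : ∀ x, ContDiff ℝ 1 fun t => u x t)
    (hFP : ∀ x, ∀ t ∈ Set.Icc (0 : ℝ) T,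
      deriv (fun τ => u x τ) t
        = -(∑ i, fderiv ℝ (fun y => f y t i * u y t) x (Pi.single i 1))
          + σ t ^ 2 / 2 *
            ∑ i, fderiv ℝ (fun y => fderiv ℝ (fun y' => u y' t) y (Pi.single i 1)) x
              (Pi.single i 1)) :
    ∀ x, ∀ t ∈ Set.Icc (0 : ℝ) T,
      deriv (fun τ => u (O.mulVec x + b) τ) t
        = -(∑ i, fderiv ℝ (fun y => f y t i * u (O.mulVec y + b) t) x (Pi.single i 1))
          + σ t ^ 2 / 2 *
            ∑ i, fderiv ℝ
              (fun y => fderiv ℝ (fun y' => u (O.mulVec y' + b) t) y (Pi.single i 1)) x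
              (Pi.single i 1) := by
  classical
  intro x t ht
  -- the linear part of the rigid motion, as a continuous linear map
  set L : (Fin d → ℝ) →L[ℝ] (Fin d → ℝ) :=
    LinearMap.toContinuousLinearMap (Matrix.mulVecLin O) with hLdef
  have hLapp : ∀ v, L v = O.mulVec v := fun v => rfl
  have hgdiff : ∀ y : Fin d → ℝ, HasFDerivAt (fun z => O.mulVec z + b) L y := by
    intro y
    have h := (L.hasFDerivAt (x := y)).add_const b
    simpa [hLapp] using h
  -- chain rule for composition with the rigid motion
  have chain : ∀ (h : (Fin d → ℝ) → ℝ) (y : Fin d → ℝ),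
      DifferentiableAt ℝ h (O.mulVec y + b) → ∀ w,
      fderiv ℝ (fun z => h (O.mulVec z + b)) y w
        = fderiv ℝ h (O.mulVec y + b) (O.mulVec w) := by
    intro h y hh w
    have hc := (hh.hasFDerivAt.comp y (hgdiff y)).fderiv
    have : fderiv ℝ (fun z => h (O.mulVec z + b)) y
        = (fderiv ℝ h (O.mulVec y + b)).comp L := hc
    rw [this]
    simp [hLapp]
  -- expanding a column of `O` in the standard basis
  have col : ∀ (φ : (Fin d → ℝ) →L[ℝ] ℝ) (i : Fin d),
      φ (O.mulVec (Pi.single i 1)) = ∑ k, O k i * φ (Pi.single k 1) := by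
    intro φ i
    have h1 : O.mulVec (Pi.single i 1) = ∑ k, O k i • ((Pi.single k 1 : Fin d → ℝ)) := by
      funext j
      simp [Matrix.mulVec_single, Finset.sum_apply, Pi.single_apply]
    rw [h1, map_sum]
    simp [smul_eq_mul]
  -- orthogonality relations
  have orth : ∀ k k', (∑ i, O k i * O k' i) = if k = k' then (1 : ℝ) else 0 := by
    intro k k'
    have h1 : O * Oᵀ = 1 := by
      have h := (Matrix.mem_orthogonalGroup_iff (Fin d) ℝ).mp hO
      simpa [Matrix.star_eq_conjTranspose] using h
    have h2 := congrFun (congrFun h1 k) k'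
    simpa [Matrix.mul_apply, Matrix.transpose_apply, Matrix.one_apply] using h2
  have orth' : ∀ i j, (∑ k, O k i * O k j) = if i = j then (1 : ℝ) else 0 := by
    intro i j
    have h1 : Oᵀ * O = 1 := by
      have h := (Matrix.mem_orthogonalGroup_iff' (Fin d) ℝ).mp hO
      simpa [Matrix.star_eq_conjTranspose] using h
    have h2 := congrFun (congrFun h1 i) j
    simpa [Matrix.mul_apply, Matrix.transpose_apply, Matrix.one_apply] using h2
  -- inverting the equivariance
  have hfi : ∀ (y : Fin d → ℝ) (i : Fin d),
      f y t i = ∑ k, O k i * f (O.mulVec y + b) t k := by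
    intro y i
    rw [hf_equiv y t ht]
    symm
    have hm : ∀ k, O.mulVec (f y t) k = ∑ j, O k j * f y t j := by
      intro k; simp [Matrix.mulVec, dotProduct]
    calc (∑ k, O k i * O.mulVec (f y t) k)
        = ∑ k, ∑ j, O k i * (O k j * f y t j) := by
          simp only [hm, Finset.mul_sum]
      _ = ∑ j, ∑ k, O k i * (O k j * f y t j) := Finset.sum_comm
      _ = ∑ j, (∑ k, O k i * O k j) * f y t j := by
          refine Finset.sum_congr rfl fun j _ => ?_
          rw [Finset.sum_mul]
          exact Finset.sum_congr rfl fun k _ => by ring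
      _ = f y t i := by simp [orth']
  -- generic summation identity
  have alg : ∀ (D : Fin d → Fin d → ℝ),
      (∑ i, ∑ k, O k i * ∑ k', O k' i * D k k') = ∑ k, D k k := by
    intro D
    have h1 : ∀ i, (∑ k, O k i * ∑ k', O k' i * D k k')
        = ∑ k, ∑ k', (O k i * O k' i) * D k k' := by
      intro i
      refine Finset.sum_congr rfl fun k _ => ?_
      rw [Finset.mul_sum]
      exact Finset.sum_congr rfl fun k' _ => by ring
    simp only [h1]
    rw [Finset.sum_comm]
    refine Finset.sum_congr rfl fun k _ => ?_
    rw [Finset.sum_comm]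
    have h3 : ∀ k', (∑ i, (O k i * O k' i) * D k k')
        = (if k = k' then (1 : ℝ) else 0) * D k k' := by
      intro k'
      rw [← Finset.sum_mul, orth k k']
    simp only [h3]
    simp
  -- regularity
  have hft := hf t ht
  have hut := hu_x t ht
  have hfc : ∀ i, ContDiff ℝ 1 fun z => f z t i := fun i => contDiff_pi.mp hft i
  have hpC : ∀ k, ContDiff ℝ 1 fun z => f z t k * u z t :=
    fun k => (hfc k).mul (hut.of_le one_le_two)
  have hqC : ∀ k, ContDiff ℝ 1 fun z =>
      fderiv ℝ (fun z' => u z' t) z (Pi.single k 1) := by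
    intro k
    have h1 : ContDiff ℝ 1 (fderiv ℝ fun z => u z t) :=
      hut.fderiv_right (by norm_num)
    exact h1.clm_apply contDiff_const
  -- first key identity
  have key1 : (∑ i, fderiv ℝ (fun y => f y t i * u (O.mulVec y + b) t) x (Pi.single i 1))
      = ∑ k, fderiv ℝ (fun y => f y t k * u y t) (O.mulVec x + b) (Pi.single k 1) := by
    have hstep : ∀ i, fderiv ℝ (fun y => f y t i * u (O.mulVec y + b) t) x (Pi.single i 1)
        = ∑ k, O k i * ∑ k', O k' i *
            fderiv ℝ (fun z => f z t k * u z t) (O.mulVec x + b) (Pi.single k' 1) := by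
      intro i
      have hfun : (fun y => f y t i * u (O.mulVec y + b) t)
          = fun y => ∑ k, O k i * ((fun z => f z t k * u z t) (O.mulVec y + b)) := by
        funext y
        rw [hfi y i, Finset.sum_mul]
        exact Finset.sum_congr rfl fun k _ => by ring
      rw [hfun]
      have Hk : ∀ k : Fin d, HasFDerivAt
          (fun y => O k i * ((fun z => f z t k * u z t) (O.mulVec y + b)))
          (O k i • ((fderiv ℝ (fun z => f z t k * u z t) (O.mulVec x + b)).comp L)) x := by
        intro k
        exact (((hpC k).differentiable (by norm_num)
          (O.mulVec x + b)).hasFDerivAt.comp x (hgdiff x)).const_mul (O k i)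
      have H := HasFDerivAt.fun_sum (fun k (_ : k ∈ Finset.univ) => Hk k)
      rw [H.fderiv]
      simp only [ContinuousLinearMap.sum_apply, ContinuousLinearMap.smul_apply,
        ContinuousLinearMap.comp_apply, smul_eq_mul]
      refine Finset.sum_congr rfl fun k _ => ?_
      congr 1
      rw [hLapp]
      exact col _ i
    simp only [hstep]
    exact alg _
  -- second key identity
  have key2 : (∑ i, fderiv ℝ
        (fun y => fderiv ℝ (fun y' => u (O.mulVec y' + b) t) y (Pi.single i 1)) x
        (Pi.single i 1))
      = ∑ k, fderiv ℝ
          (fun y => fderiv ℝ (fun y' => u y' t) y (Pi.single k 1)) (O.mulVec x + b)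
          (Pi.single k 1) := by
    have hstep : ∀ i, fderiv ℝ
          (fun y => fderiv ℝ (fun y' => u (O.mulVec y' + b) t) y (Pi.single i 1)) x
          (Pi.single i 1)
        = ∑ k, O k i * ∑ k', O k' i *
            fderiv ℝ (fun z => fderiv ℝ (fun z' => u z' t) z (Pi.single k 1))
              (O.mulVec x + b) (Pi.single k' 1) := by
      intro i
      have hfun : (fun y => fderiv ℝ (fun y' => u (O.mulVec y' + b) t) y (Pi.single i 1))
          = fun y => ∑ k, O k i *
              ((fun z => fderiv ℝ (fun z' => u z' t) z (Pi.single k 1)) (O.mulVec y + b)) := by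
        funext y
        rw [chain _ y ((hut.differentiable (by norm_num)) _) (Pi.single i 1)]
        exact col _ i
      rw [hfun]
      have Hk : ∀ k : Fin d, HasFDerivAt
          (fun y => O k i *
            ((fun z => fderiv ℝ (fun z' => u z' t) z (Pi.single k 1)) (O.mulVec y + b)))
          (O k i • ((fderiv ℝ (fun z => fderiv ℝ (fun z' => u z' t) z (Pi.single k 1))
            (O.mulVec x + b)).comp L)) x := by
        intro k
        exact (((hqC k).differentiable (by norm_num)
          (O.mulVec x + b)).hasFDerivAt.comp x (hgdiff x)).const_mul (O k i)
      have H := HasFDerivAt.fun_sum (fun k (_ : k ∈ Finset.univ) => Hk k)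
      rw [H.fderiv]
      simp only [ContinuousLinearMap.sum_apply, ContinuousLinearMap.smul_apply,
        ContinuousLinearMap.comp_apply, smul_eq_mul]
      refine Finset.sum_congr rfl fun k _ => ?_
      congr 1
      rw [hLapp]
      exact col _ i
    simp only [hstep]
    exact alg _
  rw [hFP (O.mulVec x + b) t ht, key1, key2]
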